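/- Let (V, E) be a hypergraph with non-negative hyperedge weights w, where each hyperedge e has a fixed representative r(e) ∈ e, and let f be the hypergraph separation cost function f(A) = Σ_{e : r(e) ∈ A, e ⊄ A} w(e). Let x be a fractional allocation on V. For each hyperedge e and each i let d(e,i) = x(r(e), i) − min_{v ∈ e} x(v,i), and let d(e) = Σ_{i=1}^k d(e,i). Then Σ_{i=1}^k f̂(x_i) = Σ_{e ∈ E} w(e) d(e). -/

import Mathlib

open scoped BigOperators

/-- The Lovász extension `f̂(x) = ∫₀¹ f(x^θ) dθ`, where
`x^θ = {v ∈ V : x(v) ≥ θ}`. -/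
noncomputable def lovasz {V : Type*} [Fintype V] (f : Finset V → ℝ) (x : V → ℝ) : ℝ :=
  ∫ θ in (0:ℝ)..1, f (Finset.univ.filter (fun v => θ ≤ x v))

/-- `min_{v ∈ e} g(v)` (with junk value `0` for `e = ∅`). -/
noncomputable def fmin {V : Type*} (e : Finset V) (g : V → ℝ) : ℝ :=
  if h : e.Nonempty then e.inf' h g else 0

/-- The hypergraph separation cost function with representatives `r`:
`f(A) = ∑_{e : r(e) ∈ A, e ⊄ A} w(e)`. -/
noncomputable def hypergraphSep {V : Type*} [DecidableEq V]
    (E : Finset (Finset V)) (w : Finset V → ℝ) (r : Finset V → V) (A : Finset V) : ℝ :=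
  ∑ e ∈ E.filter (fun e => r e ∈ A ∧ ¬ e ⊆ A), w e

open MeasureTheory

/-- **Fractional cost for the hypergraph separation cost function.**
Let `(V,E)` be a hypergraph with non-negative weights `w` and representatives
`r(e) ∈ e`, and let `f` be the hypergraph separation cost function. Let `x` be a
fractional allocation. With `d(e,i) = x(r(e),i) − min_{v∈e} x(v,i)` and
`d(e) = ∑_i d(e,i)`, we have `∑_{i=1}^k f̂(x_i) = ∑_{e∈E} w(e) d(e)`. -/
theorem hypergraph_mc_fractional_cost
    {V : Type*} [Fintype V] [DecidableEq V]
    (E : Finset (Finset V)) (w : Finset V → ℝ) (hw : ∀ e, 0 ≤ w e)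
    (r : Finset V → V) (hr : ∀ e ∈ E, r e ∈ e)
    (k : ℕ) (x : V → Fin k → ℝ)
    (hx01 : ∀ v i, x v i ∈ Set.Icc (0:ℝ) 1)
    (hxsum : ∀ v, ∑ i, x v i = 1) :
    ∑ i, lovasz (hypergraphSep E w r) (fun v => x v i)
      = ∑ e ∈ E, w e * (∑ i, (x (r e) i - fmin e (fun v => x v i))) := by
  have hint : ∀ e ∈ E, ∀ i : Fin k,
      (fun θ : ℝ => if r e ∈ Finset.univ.filter (fun v => θ ≤ x v i) ∧
          ¬ e ⊆ Finset.univ.filter (fun v => θ ≤ x v i) then w e else 0)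
        = (Set.Ioc (fmin e (fun v => x v i)) (x (r e) i)).indicator (fun _ => w e) := by
    intro e he i
    have hne : e.Nonempty := ⟨r e, hr e he⟩
    funext θ
    have h2 : (¬ e ⊆ Finset.univ.filter (fun v => θ ≤ x v i)) ↔
        fmin e (fun v => x v i) < θ := by
      rw [fmin, dif_pos hne, Finset.inf'_lt_iff]
      simp [Finset.subset_iff, not_forall]
    rw [Set.indicator_apply]
    by_cases h : θ ∈ Set.Ioc (fmin e (fun v => x v i)) (x (r e) i)
    · rw [if_pos h, if_pos]
      obtain ⟨hm, hM⟩ := h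
      exact ⟨by simpa using hM, h2.2 hm⟩
    · rw [if_neg h, if_neg]
      intro ⟨hM, hm⟩
      exact h ⟨h2.1 hm, by simpa using hM⟩
  have hcomp : ∀ e ∈ E, ∀ i : Fin k,
      (∫ θ in (0:ℝ)..1,
        (Set.Ioc (fmin e (fun v => x v i)) (x (r e) i)).indicator (fun _ => w e) θ)
        = w e * (x (r e) i - fmin e (fun v => x v i)) := by
    intro e he i
    have hne : e.Nonempty := ⟨r e, hr e he⟩
    set m := fmin e (fun v => x v i) with hm
    set M := x (r e) i with hM
    have hm0 : 0 ≤ m := by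
      rw [hm, fmin, dif_pos hne]
      exact Finset.le_inf' hne _ (fun v _ => (hx01 v i).1)
    have hM1 : M ≤ 1 := (hx01 (r e) i).2
    have hmM : m ≤ M := by
      rw [hm, fmin, dif_pos hne]
      exact Finset.inf'_le _ (hr e he)
    rw [intervalIntegral.integral_of_le zero_le_one,
      setIntegral_indicator measurableSet_Ioc,
      Set.inter_eq_self_of_subset_right (Set.Ioc_subset_Ioc hm0 hM1),
      setIntegral_const, Real.volume_real_Ioc_of_le (by linarith),
      smul_eq_mul]
    ring
  calc ∑ i, lovasz (hypergraphSep E w r) (fun v => x v i)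
      = ∑ i, ∑ e ∈ E, ∫ θ in (0:ℝ)..1,
          (Set.Ioc (fmin e (fun v => x v i)) (x (r e) i)).indicator (fun _ => w e) θ := by
        refine Finset.sum_congr rfl fun i _ => ?_
        rw [lovasz]
        simp only [hypergraphSep, Finset.sum_filter]
        rw [intervalIntegral.integral_finset_sum]
        · refine Finset.sum_congr rfl fun e he => ?_
          rw [hint e he i]
        · intro e he
          rw [hint e he i]
          rw [intervalIntegrable_iff_integrableOn_Ioc_of_le zero_le_one,
            MeasureTheory.IntegrableOn,
            MeasureTheory.integrable_indicator_iff measurableSet_Ioc]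
          exact (MeasureTheory.integrableOn_const_iff).mpr (Or.inr
            (lt_of_le_of_lt (MeasureTheory.Measure.restrict_apply_le _ _)
              measure_Ioc_lt_top))
    _ = ∑ e ∈ E, ∑ i, w e * (x (r e) i - fmin e (fun v => x v i)) := by
        rw [Finset.sum_comm]
        exact Finset.sum_congr rfl fun e he =>
          Finset.sum_congr rfl fun i _ => hcomp e he i
    _ = ∑ e ∈ E, w e * (∑ i, (x (r e) i - fmin e (fun v => x v i))) := by
        exact Finset.sum_congr rfl fun e _ => (Finset.mul_sum _ _ _).symm
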